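/- arXiv:2201.07905 — 12 statements merged into one kernel-verified Lean document; each statement's English description precedes it below -/
import Mathlib

section
/- For every cluster set C, the weighted Robinson–Foulds objective decomposes cluster-by-cluster: f(C) = Σ_{c ∈ C} (W − s(c)) + Σ_{c ∈ (C₁ ∪ … ∪ C_p) \ C} s(c). -/
/-- Two clusters are *compatible* if they are disjoint or one contains the other. -/
def compatible {L : Type*} [DecidableEq L] (c₁ c₂ : Finset L) : Prop :=
  c₁ ∩ c₂ = ∅ ∨ c₁ ⊆ c₂ ∨ c₂ ⊆ c₁

/-- A cluster set is *laminar* if any two of its elements are compatible. -/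
def laminar {L : Type*} [DecidableEq L] (S : Finset (Finset L)) : Prop :=
  ∀ c₁ ∈ S, ∀ c₂ ∈ S, compatible c₁ c₂

/-- The weighted support `s(c) = Σ_k w_k · 𝟙(c ∈ C_k)` of a cluster `c`. -/
def supp {L : Type*} [DecidableEq L] {p : ℕ} (w : Fin p → ℝ)
    (C : Fin p → Finset (Finset L)) (c : Finset L) : ℝ :=
  ∑ k, if c ∈ C k then w k else 0

/-- The weighted Robinson–Foulds objective `f(X) = Σ_k w_k · |X Δ C_k|`. -/
def rfObj {L : Type*} [DecidableEq L] {p : ℕ} (w : Fin p → ℝ)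
    (C : Fin p → Finset (Finset L)) (X : Finset (Finset L)) : ℝ :=
  ∑ k, w k * ((symmDiff X (C k)).card : ℝ)

/-- the weighted RF objective decomposes cluster-by-cluster:
`f(C) = Σ_{c ∈ C} (W − s(c)) + Σ_{c ∈ (C₁ ∪ … ∪ C_p) \ C} s(c)`. -/
theorem rfObj_decomposition {L : Type*} [DecidableEq L] {p : ℕ}
    (w : Fin p → ℝ) (C : Fin p → Finset (Finset L))
    (hw : ∀ k, 0 < w k) (hCne : ∀ k, ∀ c ∈ C k, c.Nonempty)
    (X : Finset (Finset L)) (hXne : ∀ c ∈ X, c.Nonempty) :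
    rfObj w C X =
      (∑ c ∈ X, ((∑ k, w k) - supp w C c)) +
      ∑ c ∈ (Finset.univ.biUnion C) \ X, supp w C c := by
  classical
  set U := Finset.univ.biUnion C with hU
  have key : ∀ k, w k * ((symmDiff X (C k)).card : ℝ) =
      (∑ c ∈ X, (w k - if c ∈ C k then w k else 0)) +
      ∑ c ∈ U \ X, (if c ∈ C k then w k else 0) := by
    intro k
    have hsub : C k ⊆ U := fun c hc => Finset.mem_biUnion.2 ⟨k, Finset.mem_univ k, hc⟩
    have h1 : symmDiff X (C k) = (X \ C k) ∪ (C k \ X) := by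
      simp [symmDiff, Finset.sup_eq_union]
    have hdisj : Disjoint (X \ C k) (C k \ X) := by
      apply Finset.disjoint_left.2
      intro a ha hb
      exact (Finset.mem_sdiff.1 hb).2 (Finset.mem_sdiff.1 ha).1
    have hcard : ((symmDiff X (C k)).card : ℝ) =
        ((X \ C k).card : ℝ) + ((C k \ X).card : ℝ) := by
      rw [h1]
      rw [Finset.card_union_of_disjoint hdisj]
      push_cast; ring
    have hA : ((X \ C k).card : ℝ) = ∑ c ∈ X, (if c ∈ C k then (0:ℝ) else 1) := by
      rw [Finset.sum_ite, Finset.sum_const, Finset.sum_const]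
      simp [Finset.sdiff_eq_filter]
    have hBset : C k \ X = (U \ X).filter (· ∈ C k) := by
      ext c
      simp only [Finset.mem_sdiff, Finset.mem_filter]
      constructor
      · rintro ⟨h1', h2'⟩; exact ⟨⟨hsub h1', h2'⟩, h1'⟩
      · rintro ⟨⟨_, h2'⟩, h3'⟩; exact ⟨h3', h2'⟩
    have hB : ((C k \ X).card : ℝ) = ∑ c ∈ U \ X, (if c ∈ C k then (1:ℝ) else 0) := by
      rw [hBset, Finset.sum_ite, Finset.sum_const, Finset.sum_const]
      simp
    rw [hcard, mul_add, hA, hB, Finset.mul_sum, Finset.mul_sum]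
    congr 1 <;> apply Finset.sum_congr rfl <;> intro c _ <;> split <;> ring
  unfold rfObj
  rw [Finset.sum_congr rfl (fun k _ => key k), Finset.sum_add_distrib,
    Finset.sum_comm, Finset.sum_comm (s := Finset.univ)]
  congr 1
  · apply Finset.sum_congr rfl; intro c _
    rw [Finset.sum_sub_distrib]; rfl
end

section
/- If a cluster c belongs to a cluster set C and s(c) < W/2, then f(C \ {c}) < f(C); dually, if c ∉ C and s(c) > W/2, then f(C ∪ {c}) < f(C). -/
lemma symmDiff_singleton_card {α : Type*} [DecidableEq α] (S : Finset α) (c : α) :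
    ((symmDiff S {c}).card : ℝ) = S.card + (if c ∈ S then (-1:ℝ) else 1) := by
  by_cases h : c ∈ S
  · have e : symmDiff S {c} = S.erase c := by
      ext x
      by_cases hx : x = c <;> simp [Finset.mem_symmDiff, hx, h]
    rw [e, Finset.card_erase_of_mem h, if_pos h]
    have h1 : 1 ≤ S.card := Finset.card_pos.mpr ⟨c, h⟩
    push_cast [Nat.cast_sub h1]
    ring
  · have e : symmDiff S {c} = insert c S := by
      ext x
      by_cases hx : x = c <;> simp [Finset.mem_symmDiff, hx, h]
    rw [e, Finset.card_insert_of_notMem h, if_neg h]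
    push_cast
    ring

lemma symmDiff_flip_card {α : Type*} [DecidableEq α] (X Y : Finset α) (c : α) :
    ((symmDiff (symmDiff X {c}) Y).card : ℝ)
      = (symmDiff X Y).card + (if c ∈ symmDiff X Y then (-1:ℝ) else 1) := by
  rw [symmDiff_assoc, symmDiff_comm ({c} : Finset α) Y, ← symmDiff_assoc]
  exact symmDiff_singleton_card _ _

lemma rfObj_flip {L : Type*} [DecidableEq L] {p : ℕ} (w : Fin p → ℝ)
    (C : Fin p → Finset (Finset L)) (X : Finset (Finset L)) (c : Finset L) :
    rfObj w C (symmDiff X {c}) = rfObj w C X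
      + ∑ k, w k * (if c ∈ symmDiff X (C k) then (-1:ℝ) else 1) := by
  unfold rfObj
  rw [← Finset.sum_add_distrib]
  refine Finset.sum_congr rfl fun k _ => ?_
  rw [symmDiff_flip_card]
  ring

/-- removing a cluster with minority support strictly decreases the
objective; dually, inserting a missing cluster with majority support strictly
decreases the objective. -/
theorem rfObj_erase_lt_and_insert_lt {L : Type*} [DecidableEq L] {p : ℕ}
    (w : Fin p → ℝ) (C : Fin p → Finset (Finset L))
    (hw : ∀ k, 0 < w k) (hCne : ∀ k, ∀ c ∈ C k, c.Nonempty)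
    (X : Finset (Finset L)) (hXne : ∀ c ∈ X, c.Nonempty)
    (c : Finset L) (hc : c.Nonempty) :
    (c ∈ X → supp w C c < (∑ k, w k) / 2 →
      rfObj w C (X.erase c) < rfObj w C X) ∧
    (c ∉ X → (∑ k, w k) / 2 < supp w C c →
      rfObj w C (insert c X) < rfObj w C X) := by
  constructor
  · intro hcX hsupp
    have e : X.erase c = symmDiff X {c} := by
      ext x
      by_cases hx : x = c <;> simp [Finset.mem_symmDiff, hx, hcX]
    rw [e, rfObj_flip]
    have hsum : ∑ k, w k * (if c ∈ symmDiff X (C k) then (-1:ℝ) else 1)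
        = 2 * supp w C c - ∑ k, w k := by
      unfold supp
      rw [Finset.mul_sum, ← Finset.sum_sub_distrib]
      refine Finset.sum_congr rfl fun k _ => ?_
      have : c ∈ symmDiff X (C k) ↔ c ∉ C k := by
        simp [Finset.mem_symmDiff, hcX]
      simp only [this]
      by_cases h : c ∈ C k <;> simp [h] <;> ring
    rw [hsum]
    linarith
  · intro hcX hsupp
    have e : insert c X = symmDiff X {c} := by
      ext x
      by_cases hx : x = c <;> simp [Finset.mem_symmDiff, hx, hcX]
    rw [e, rfObj_flip]
    have hsum : ∑ k, w k * (if c ∈ symmDiff X (C k) then (-1:ℝ) else 1)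
        = ∑ k, w k - 2 * supp w C c := by
      unfold supp
      rw [Finset.mul_sum, ← Finset.sum_sub_distrib]
      refine Finset.sum_congr rfl fun k _ => ?_
      have : c ∈ symmDiff X (C k) ↔ c ∈ C k := by
        simp [Finset.mem_symmDiff, hcX]
      simp only [this]
      by_cases h : c ∈ C k <;> simp [h] <;> ring
    rw [hsum]
    linarith
end

section
/- (Lemma 2, first part) If a cluster c satisfies s(c) > W/2, i.e., Σ_{k=1}^p w_k·𝟙(c ∈ C_k) > 0.5·Σ_{k=1}^p w_k, then c belongs to every optimal solution C*. -/
instance {L : Type*} [DecidableEq L] (c₁ c₂ : Finset L) : Decidable (compatible c₁ c₂) := by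
  unfold compatible; infer_instance

lemma compatible_comm {L : Type*} [DecidableEq L] {c₁ c₂ : Finset L} :
    compatible c₁ c₂ ↔ compatible c₂ c₁ := by
  unfold compatible; rw [Finset.inter_comm]; tauto

lemma compatible_self {L : Type*} [DecidableEq L] (c : Finset L) : compatible c c :=
  Or.inr (Or.inl subset_rfl)

lemma rfObj_repr {L : Type*} [DecidableEq L] {p : ℕ} (w : Fin p → ℝ)
    (C : Fin p → Finset (Finset L)) (U Y : Finset (Finset L))
    (hC : ∀ k, C k ⊆ U) (hY : Y ⊆ U) :
    rfObj w C Y = ∑ d ∈ U, (if d ∈ Y then (∑ k, w k) - supp w C d else supp w C d) := by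
  unfold rfObj
  have hcard : ∀ k : Fin p, ((symmDiff Y (C k)).card : ℝ)
      = ∑ d ∈ U, (if d ∈ symmDiff Y (C k) then (1:ℝ) else 0) := by
    intro k
    rw [Finset.sum_boole]
    have hsub : symmDiff Y (C k) ⊆ U := by
      intro d hd
      rw [Finset.mem_symmDiff] at hd
      rcases hd with ⟨h, _⟩ | ⟨h, _⟩
      · exact hY h
      · exact hC k h
    rw [Finset.filter_mem_eq_inter, Finset.inter_eq_right.mpr hsub]
  calc ∑ k, w k * ((symmDiff Y (C k)).card : ℝ)
      = ∑ k, ∑ d ∈ U, (if d ∈ symmDiff Y (C k) then w k else 0) := by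
        refine Finset.sum_congr rfl fun k _ => ?_
        rw [hcard k, Finset.mul_sum]
        refine Finset.sum_congr rfl fun d _ => ?_
        split <;> simp
    _ = ∑ d ∈ U, ∑ k, (if d ∈ symmDiff Y (C k) then w k else 0) := Finset.sum_comm
    _ = _ := by
        refine Finset.sum_congr rfl fun d _ => ?_
        by_cases hdY : d ∈ Y
        · simp only [hdY, if_true]
          rw [eq_sub_iff_add_eq]
          simp only [supp]
          rw [← Finset.sum_add_distrib]
          refine Finset.sum_congr rfl fun k _ => ?_
          by_cases hdC : d ∈ C k <;>
            simp [Finset.mem_symmDiff, hdY, hdC, supp]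
        · simp only [hdY, if_false, supp]
          refine Finset.sum_congr rfl fun k _ => ?_
          by_cases hdC : d ∈ C k <;> simp [Finset.mem_symmDiff, hdY, hdC]

/-- Lemma 2, first part: a cluster with majority weighted support,
`s(c) > W/2`, belongs to every optimal solution `C*`. -/
theorem majority_mem_optimal {L : Type*} [DecidableEq L] {p : ℕ}
    (w : Fin p → ℝ) (C : Fin p → Finset (Finset L))
    (hw : ∀ k, 0 < w k) (hCne : ∀ k, ∀ c ∈ C k, c.Nonempty)
    (hClam : ∀ k, laminar (C k))
    (c : Finset L) (hc : c.Nonempty)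
    (hmaj : (∑ k, w k) / 2 < supp w C c)
    (Cstar : Finset (Finset L)) (hne : ∀ c' ∈ Cstar, c'.Nonempty)
    (hlam : laminar Cstar)
    (hopt : ∀ X : Finset (Finset L), (∀ c' ∈ X, c'.Nonempty) → laminar X →
      rfObj w C Cstar ≤ rfObj w C X) :
    c ∈ Cstar := by
  by_contra hcn
  set W : ℝ := ∑ k, w k with hW
  -- incompatible clusters have low support
  have hkey : ∀ d : Finset L, ¬ compatible c d → supp w C c + supp w C d ≤ W := by
    intro d hincomp
    rw [supp, supp, ← Finset.sum_add_distrib]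
    refine Finset.sum_le_sum fun k _ => ?_
    by_cases h1 : c ∈ C k
    · by_cases h2 : d ∈ C k
      · exact absurd (hClam k c h1 d h2) hincomp
      · simp [h1, h2]
    · by_cases h2 : d ∈ C k <;> simp [h1, h2, (hw k).le]
  set B : Finset (Finset L) := Cstar.filter (fun d => ¬ compatible c d) with hB
  set X : Finset (Finset L) := insert c (Cstar \ B) with hX
  have hXne : ∀ c' ∈ X, c'.Nonempty := by
    intro c' hc'
    rcases Finset.mem_insert.mp hc' with rfl | h
    · exact hc
    · exact hne c' (Finset.mem_sdiff.mp h).1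
  have hcompat : ∀ d ∈ Cstar \ B, compatible c d := by
    intro d hd
    rcases Finset.mem_sdiff.mp hd with ⟨h1, h2⟩
    by_contra hcc
    exact h2 (Finset.mem_filter.mpr ⟨h1, hcc⟩)
  have hXlam : laminar X := by
    intro c₁ h1 c₂ h2
    rcases Finset.mem_insert.mp h1 with rfl | h1 <;>
      rcases Finset.mem_insert.mp h2 with rfl | h2
    · exact compatible_self _
    · exact hcompat _ h2
    · exact compatible_comm.mp (hcompat _ h1)
    · exact hlam _ (Finset.mem_sdiff.mp h1).1 _ (Finset.mem_sdiff.mp h2).1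
  -- universe
  set U : Finset (Finset L) := insert c (Cstar ∪ Finset.univ.biUnion C) with hU
  have hCU : ∀ k, C k ⊆ U := fun k =>
    (Finset.subset_biUnion_of_mem C (Finset.mem_univ k)).trans
      ((Finset.subset_union_right).trans (Finset.subset_insert _ _))
  have hCsU : Cstar ⊆ U :=
    (Finset.subset_union_left).trans (Finset.subset_insert _ _)
  have hXU : X ⊆ U := by
    apply Finset.insert_subset (Finset.mem_insert_self _ _)
    exact (Finset.sdiff_subset).trans hCsU
  have hlt : rfObj w C X < rfObj w C Cstar := by
    rw [rfObj_repr w C U X hCU hXU, rfObj_repr w C U Cstar hCU hCsU]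
    apply Finset.sum_lt_sum
    · intro d hd
      by_cases hdc : d = c
      · subst hdc
        have hdX : d ∈ X := Finset.mem_insert_self _ _
        simp only [hdX, if_true, hcn, if_false]
        linarith
      · by_cases hdCs : d ∈ Cstar
        · by_cases hdB : d ∈ B
          · have hdX : d ∉ X := by
              simp only [hX, Finset.mem_insert, Finset.mem_sdiff]
              push_neg
              exact ⟨hdc, fun _ => hdB⟩
            have hincomp : ¬ compatible c d := (Finset.mem_filter.mp hdB).2
            have h1 := hkey d hincomp
            simp only [hdX, if_false, hdCs, if_true]
            linarith
          · have hdX : d ∈ X := Finset.mem_insert_of_mem (Finset.mem_sdiff.mpr ⟨hdCs, hdB⟩)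
            simp [hdX, hdCs]
        · have hdX : d ∉ X := by
            simp only [hX, Finset.mem_insert, Finset.mem_sdiff]
            push_neg
            exact ⟨hdc, fun h => absurd h hdCs⟩
          simp [hdX, hdCs]
    · refine ⟨c, Finset.mem_insert_self _ _, ?_⟩
      have hcX : c ∈ X := Finset.mem_insert_self _ _
      simp only [hcX, if_true, hcn, if_false]
      linarith
  exact absurd (hopt X hXne hXlam) (not_le.mpr hlt)
end

section
/- (Lemma 2, second part) If a cluster c satisfies s(c) < W/2, i.e., Σ_{k=1}^p w_k·𝟙(c ∈ C_k) < 0.5·Σ_{k=1}^p w_k, then c belongs to no optimal solution C*. -/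
lemma card_symmDiff_erase {L : Type*} [DecidableEq L] (X Y : Finset (Finset L))
    (c : Finset L) (hcX : c ∈ X) :
    ((symmDiff (X.erase c) Y).card : ℝ) =
      (symmDiff X Y).card + (if c ∈ Y then 1 else (-1)) := by
  by_cases hcY : c ∈ Y
  · have h1 : symmDiff (X.erase c) Y = insert c (symmDiff X Y) := by
      ext a
      simp only [Finset.mem_symmDiff, Finset.mem_erase, Finset.mem_insert]
      by_cases ha : a = c
      · subst ha; simp [hcX, hcY]
      · simp [ha]
    have h2 : c ∉ symmDiff X Y := by
      simp [Finset.mem_symmDiff, hcX, hcY]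
    rw [h1, Finset.card_insert_of_notMem h2]
    simp [hcY]
  · have h1 : symmDiff (X.erase c) Y = (symmDiff X Y).erase c := by
      ext a
      simp only [Finset.mem_symmDiff, Finset.mem_erase]
      by_cases ha : a = c
      · subst ha; simp [hcX, hcY]
      · simp [ha]
    have h2 : c ∈ symmDiff X Y := by
      simp [Finset.mem_symmDiff, hcX, hcY]
    rw [h1, Finset.card_erase_of_mem h2]
    have : 1 ≤ (symmDiff X Y).card := Finset.card_pos.mpr ⟨c, h2⟩
    push_cast [Nat.cast_sub this]
    simp only [hcY, if_false]
    ring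



/-- Lemma 2, second part: a cluster with minority weighted support,
`s(c) < W/2`, belongs to no optimal solution `C*`. -/
theorem minority_not_mem_optimal {L : Type*} [DecidableEq L] {p : ℕ}
    (w : Fin p → ℝ) (C : Fin p → Finset (Finset L))
    (hw : ∀ k, 0 < w k) (hCne : ∀ k, ∀ c ∈ C k, c.Nonempty)
    (hClam : ∀ k, laminar (C k))
    (c : Finset L) (hc : c.Nonempty)
    (hmin : supp w C c < (∑ k, w k) / 2)
    (Cstar : Finset (Finset L)) (hne : ∀ c' ∈ Cstar, c'.Nonempty)
    (hlam : laminar Cstar)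
    (hopt : ∀ X : Finset (Finset L), (∀ c' ∈ X, c'.Nonempty) → laminar X →
      rfObj w C Cstar ≤ rfObj w C X) :
    c ∉ Cstar := by
  intro hcC
  have hX := hopt (Cstar.erase c)
    (fun c' hc' => hne c' (Finset.mem_of_mem_erase hc'))
    (fun c₁ h1 c₂ h2 => hlam c₁ (Finset.mem_of_mem_erase h1) c₂ (Finset.mem_of_mem_erase h2))
  have hval : rfObj w C (Cstar.erase c)
      = rfObj w C Cstar + (2 * supp w C c - ∑ k, w k) := by
    unfold rfObj supp
    simp only [Finset.mul_sum, ← Finset.sum_sub_distrib, ← Finset.sum_add_distrib]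
    refine Finset.sum_congr rfl fun k _ => ?_
    rw [card_symmDiff_erase Cstar (C k) c hcC]
    by_cases h : c ∈ C k <;> simp [h] <;> ring
  rw [hval] at hX
  have : (0:ℝ) ≤ 2 * supp w C c - ∑ k, w k := by linarith
  linarith
end

section
/- (Lemma 3) If clusters c₁ and c₂ both have majority weighted support, i.e., s(c₁) > W/2 and s(c₂) > W/2, then c₁ and c₂ are compatible. -/
/-- Lemma 3: two clusters each with majority weighted support,
`s(c₁) > W/2` and `s(c₂) > W/2`, are compatible. -/
theorem majority_majority_compatible {L : Type*} [DecidableEq L] {p : ℕ}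
    (w : Fin p → ℝ) (C : Fin p → Finset (Finset L))
    (hw : ∀ k, 0 < w k) (hCne : ∀ k, ∀ c ∈ C k, c.Nonempty)
    (hClam : ∀ k, laminar (C k))
    (c₁ c₂ : Finset L) (h₁ : c₁.Nonempty) (h₂ : c₂.Nonempty)
    (hm₁ : (∑ k, w k) / 2 < supp w C c₁)
    (hm₂ : (∑ k, w k) / 2 < supp w C c₂) :
    compatible c₁ c₂ := by
  by_contra hnc
  have key : supp w C c₁ + supp w C c₂ ≤ ∑ k, w k := by
    rw [supp, supp, ← Finset.sum_add_distrib]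
    apply Finset.sum_le_sum
    intro k _
    by_cases h1 : c₁ ∈ C k <;> by_cases h2 : c₂ ∈ C k <;>
      simp [h1, h2, (hw k).le]
    exact absurd (hClam k c₁ h1 c₂ h2) hnc
  linarith
end

section
/- The majority cluster set M⁺ = {c ∈ C₁ ∪ … ∪ C_p : s(c) > W/2} is laminar, i.e., any two of its elements are compatible. -/
attribute [local instance] Classical.propDecidable

/-- the majority cluster set
`M⁺ = {c ∈ C₁ ∪ … ∪ C_p : s(c) > W/2}` is laminar. -/
theorem majority_set_laminar {L : Type*} [DecidableEq L] {p : ℕ}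
    (w : Fin p → ℝ) (C : Fin p → Finset (Finset L))
    (hw : ∀ k, 0 < w k) (hCne : ∀ k, ∀ c ∈ C k, c.Nonempty)
    (hClam : ∀ k, laminar (C k)) :
    laminar ((Finset.univ.biUnion C).filter
      (fun c => (∑ k, w k) / 2 < supp w C c)) := by
  intro c₁ h₁ c₂ h₂
  rw [Finset.mem_filter] at h₁ h₂
  -- there must be a common k with c₁ ∈ C k and c₂ ∈ C k
  by_cases hcom : ∃ k, c₁ ∈ C k ∧ c₂ ∈ C k
  · obtain ⟨k, hk₁, hk₂⟩ := hcom
    exact hClam k c₁ hk₁ c₂ hk₂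
  · exfalso
    push_neg at hcom
    have hle : supp w C c₁ + supp w C c₂ ≤ ∑ k, w k := by
      unfold supp
      rw [← Finset.sum_add_distrib]
      apply Finset.sum_le_sum
      intro k _
      by_cases h1 : c₁ ∈ C k
      · have h2 : c₂ ∉ C k := hcom k h1
        simp [h1, h2]
      · simp [h1]
        split
        · exact le_refl _
        · exact (hw k).le
    have := add_lt_add h₁.2 h₂.2
    linarith
end

section
/- If a cluster c has exactly half weighted support, s(c) = W/2, and a cluster c' has majority weighted support, s(c') > W/2, then c and c' are compatible. -/
/-- a cluster with exactly half weighted support is compatible with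
every cluster with majority weighted support. -/
theorem half_majority_compatible {L : Type*} [DecidableEq L] {p : ℕ}
    (w : Fin p → ℝ) (C : Fin p → Finset (Finset L))
    (hw : ∀ k, 0 < w k) (hCne : ∀ k, ∀ c ∈ C k, c.Nonempty)
    (hClam : ∀ k, laminar (C k))
    (c c' : Finset L) (hc : c.Nonempty) (hc' : c'.Nonempty)
    (hhalf : supp w C c = (∑ k, w k) / 2)
    (hmaj : (∑ k, w k) / 2 < supp w C c') :
    compatible c c' := by
  by_contra hnc
  have h : supp w C c + supp w C c' ≤ ∑ k, w k := by
    unfold supp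
    rw [← Finset.sum_add_distrib]
    apply Finset.sum_le_sum
    intro k _
    by_cases h1 : c ∈ C k
    · by_cases h2 : c' ∈ C k
      · exact absurd (hClam k c h1 c' h2) hnc
      · simp [h1, h2]
    · by_cases h2 : c' ∈ C k <;> simp [h1, h2] <;> linarith [hw k]
  linarith
end

section
/- Adding a cluster with exactly half weighted support does not change the weighted Robinson–Foulds objective: if c ∉ C and s(c) = W/2, then f(C ∪ {c}) = f(C). -/
/-- adding a cluster with exactly half weighted support does not
change the weighted RF objective: if `c ∉ C` and `s(c) = W/2`, then
`f(C ∪ {c}) = f(C)`. -/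
theorem rfObj_insert_half {L : Type*} [DecidableEq L] {p : ℕ}
    (w : Fin p → ℝ) (C : Fin p → Finset (Finset L))
    (hw : ∀ k, 0 < w k) (hCne : ∀ k, ∀ c ∈ C k, c.Nonempty)
    (X : Finset (Finset L)) (hXne : ∀ c ∈ X, c.Nonempty)
    (c : Finset L) (hc : c.Nonempty) (hcX : c ∉ X)
    (hhalf : supp w C c = (∑ k, w k) / 2) :
    rfObj w C (insert c X) = rfObj w C X := by
  have key : ∀ k, ((symmDiff (insert c X) (C k)).card : ℝ) =
      ((symmDiff X (C k)).card : ℝ) + (if c ∈ C k then (-1 : ℝ) else 1) := by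
    intro k
    by_cases hk : c ∈ C k
    · have hm : c ∈ symmDiff X (C k) := by
        simp [Finset.mem_symmDiff, hk, hcX]
      have hset : symmDiff (insert c X) (C k) = (symmDiff X (C k)).erase c := by
        ext x
        by_cases hx : x = c
        · subst hx; simp [Finset.mem_symmDiff, hk]
        · simp only [Finset.mem_symmDiff, Finset.mem_insert, Finset.mem_erase, hx]
          tauto
      rw [hset, Finset.card_erase_of_mem hm,
        Nat.cast_sub (Finset.card_pos.mpr ⟨c, hm⟩)]
      simp [hk]
      ring
    · have hm : c ∉ symmDiff X (C k) := by
        simp [Finset.mem_symmDiff, hk, hcX]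
      have hset : symmDiff (insert c X) (C k) = insert c (symmDiff X (C k)) := by
        ext x
        by_cases hx : x = c
        · subst hx; simp [Finset.mem_symmDiff, hk]
        · simp only [Finset.mem_symmDiff, Finset.mem_insert, hx]
          tauto
      rw [hset, Finset.card_insert_of_notMem hm]
      push_cast
      simp [hk]
  unfold rfObj
  simp only [key, mul_add, Finset.sum_add_distrib]
  have : (∑ k, w k * (if c ∈ C k then (-1 : ℝ) else 1)) = 0 := by
    have h1 : ∀ k : Fin p, w k * (if c ∈ C k then (-1 : ℝ) else 1)
        = w k - 2 * (if c ∈ C k then w k else 0) := by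
      intro k; by_cases hk : c ∈ C k <;> simp [hk] <;> ring
    simp only [h1, Finset.sum_sub_distrib, ← Finset.mul_sum]
    have : (∑ k, if c ∈ C k then w k else 0) = (∑ k, w k) / 2 := hhalf
    rw [this]; ring
  rw [this, add_zero]
end

section
/- If c₁ and c₂ are distinct incompatible clusters each with exactly half weighted support, s(c₁) = s(c₂) = W/2, then their supporting index sets are complementary: {k ∈ {1,…,p} : c₂ ∈ C_k} = {1,…,p} \ {k ∈ {1,…,p} : c₁ ∈ C_k}. -/
/-- distinct incompatible clusters each with exactly half weighted
support have complementary supporting index sets. -/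
theorem half_half_incompatible_complementary {L : Type*} [DecidableEq L] {p : ℕ}
    (w : Fin p → ℝ) (C : Fin p → Finset (Finset L))
    (hw : ∀ k, 0 < w k) (hCne : ∀ k, ∀ c ∈ C k, c.Nonempty)
    (hClam : ∀ k, laminar (C k))
    (c₁ c₂ : Finset L) (h₁ : c₁.Nonempty) (h₂ : c₂.Nonempty)
    (hne : c₁ ≠ c₂) (hinc : ¬ compatible c₁ c₂)
    (hs₁ : supp w C c₁ = (∑ k, w k) / 2)
    (hs₂ : supp w C c₂ = (∑ k, w k) / 2) :
    {k : Fin p | c₂ ∈ C k} = Set.univ \ {k : Fin p | c₁ ∈ C k} := by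
  have hdisj : ∀ k, ¬ (c₁ ∈ C k ∧ c₂ ∈ C k) := by
    rintro k ⟨H1, H2⟩
    exact hinc (hClam k c₁ H1 c₂ H2)
  have hsum : ∑ k, ((if c₁ ∈ C k then w k else 0) + (if c₂ ∈ C k then w k else 0))
      = ∑ k, w k := by
    rw [Finset.sum_add_distrib]
    show supp w C c₁ + supp w C c₂ = _
    rw [hs₁, hs₂]; ring
  have hle : ∀ k ∈ Finset.univ,
      (if c₁ ∈ C k then w k else 0) + (if c₂ ∈ C k then w k else 0) ≤ w k := by
    intro k _
    by_cases H1 : c₁ ∈ C k <;> by_cases H2 : c₂ ∈ C k <;>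
      simp [H1, H2, (hw k).le]
    exact absurd ⟨H1, H2⟩ (hdisj k)
  have heq : ∀ k,
      (if c₁ ∈ C k then w k else 0) + (if c₂ ∈ C k then w k else 0) = w k := by
    intro k
    exact (Finset.sum_eq_sum_iff_of_le hle).mp hsum k (Finset.mem_univ k)
  ext k
  simp only [Set.mem_setOf_eq, Set.mem_diff, Set.mem_univ, true_and]
  constructor
  · intro H2 H1; exact hdisj k ⟨H1, H2⟩
  · intro H1
    have := heq k
    simp only [H1, if_false, zero_add] at this
    by_contra H2
    simp only [H2, if_false] at this
    exact absurd this.symm (hw k).ne'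
end

section
/- (Lemma 4) Let C' = {c ∈ C₁ ∪ … ∪ C_p : s(c) = W/2} be the clusters with exactly half weighted support, and let G be the simple graph on vertex set C' with an edge between two clusters exactly when they are incompatible. Then G is bipartite; equivalently, G contains no odd cycle and admits a proper 2-coloring. -/
/-- The incompatibility graph on a set `V` of clusters: two clusters are adjacent
exactly when they are incompatible. -/
def incompGraph {L : Type*} [DecidableEq L] (V : Set (Finset L)) : SimpleGraph V where
  Adj a b := ¬ compatible (a : Finset L) (b : Finset L)
  symm := by
    constructor
    intro a b h hc
    refine h ?_
    rcases hc with h' | h' | h'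
    · exact Or.inl (by rwa [Finset.inter_comm])
    · exact Or.inr (Or.inr h')
    · exact Or.inr (Or.inl h')
  loopless := by
    constructor
    intro a h
    exact h (Or.inr (Or.inl (subset_refl _)))

/-- Lemma 4: the incompatibility graph on the clusters with exactly
half weighted support, `C' = {c ∈ C₁ ∪ … ∪ C_p : s(c) = W/2}`, is bipartite,
i.e., it admits a proper 2-coloring. -/
theorem incompGraph_half_bipartite {L : Type*} [DecidableEq L] {p : ℕ}
    (w : Fin p → ℝ) (C : Fin p → Finset (Finset L))
    (hw : ∀ k, 0 < w k) (hCne : ∀ k, ∀ c ∈ C k, c.Nonempty)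
    (hClam : ∀ k, laminar (C k)) :
    (incompGraph {c : Finset L |
      c ∈ Finset.univ.biUnion C ∧ supp w C c = (∑ k, w k) / 2}).Colorable 2 := by
  rcases Nat.eq_zero_or_pos p with hp | hp
  · subst hp
    refine ⟨SimpleGraph.Coloring.mk (fun _ => 0) ?_⟩
    intro a b hab
    exfalso
    have h := a.2.1
    simp at h
  · set k0 : Fin p := ⟨0, hp⟩
    refine ⟨SimpleGraph.Coloring.mk
      (fun v => if (v : Finset L) ∈ C k0 then 0 else 1) ?_⟩
    intro a b hab
    have hdisj : ∀ k, ¬((a : Finset L) ∈ C k ∧ (b : Finset L) ∈ C k) := by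
      rintro k ⟨ha, hb⟩
      exact hab (hClam k _ ha _ hb)
    have ha2 : supp w C (a : Finset L) = (∑ k, w k) / 2 := a.2.2
    have hb2 : supp w C (b : Finset L) = (∑ k, w k) / 2 := b.2.2
    have hsum : ∑ k, ((if (a : Finset L) ∈ C k then w k else 0)
        + (if (b : Finset L) ∈ C k then w k else 0)) = ∑ k, w k := by
      rw [Finset.sum_add_distrib]
      unfold supp at ha2 hb2
      linarith
    have hle : ∀ k ∈ Finset.univ, ((if (a : Finset L) ∈ C k then w k else 0)
        + (if (b : Finset L) ∈ C k then w k else 0)) ≤ w k := by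
      intro k _
      have := hdisj k
      have := (hw k).le
      split_ifs with h1 h2 h2 <;> simp_all <;> linarith
    have key := (Finset.sum_eq_sum_iff_of_le hle).mp hsum k0 (Finset.mem_univ k0)
    have hwk := hw k0
    by_cases h1 : (a : Finset L) ∈ C k0 <;> by_cases h2 : (b : Finset L) ∈ C k0
    · exact absurd ⟨h1, h2⟩ (hdisj k0)
    · simp [h1, h2]
    · simp [h1, h2]
    · exfalso
      rw [if_neg h1, if_neg h2] at key
      linarith
end

section
/- (Theorem 1) Let M⁺ = {c ∈ C₁ ∪ … ∪ C_p : s(c) > W/2} and let M be any pairwise-compatible subset of C' = {c ∈ C₁ ∪ … ∪ C_p : s(c) = W/2}. Then the cluster set M⁺ ∪ M is laminar and satisfies f(M⁺ ∪ M) ≤ f(C) for every laminar cluster set C; that is, M⁺ ∪ M minimizes the weighted Robinson–Foulds objective subject to the compatibility constraint that all pairs of clusters in the output are compatible. -/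
attribute [local instance] Classical.propDecidable

/-- Cardinality of a symmetric difference, over the reals. -/
lemma card_symmDiff_real {α : Type*} [DecidableEq α] (s t : Finset α) :
    ((symmDiff s t).card : ℝ) = (s.card : ℝ) + t.card - 2 * (s ∩ t).card := by
  have h1 : (s \ t).card + (s ∩ t).card = s.card := by
    rw [Finset.card_sdiff_add_card_inter]
  have h2 : (t \ s).card + (t ∩ s).card = t.card := by
    rw [Finset.card_sdiff_add_card_inter]
  have h3 : (symmDiff s t).card = (s \ t).card + (t \ s).card := by
    have : symmDiff s t = (s \ t) ∪ (t \ s) := by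
      simp [symmDiff_def, Finset.sup_eq_union]
    rw [this]
    exact Finset.card_union_of_disjoint (disjoint_sdiff_sdiff)
  have h4 : t ∩ s = s ∩ t := Finset.inter_comm t s
  rw [h4] at h2
  have := congrArg (Nat.cast : ℕ → ℝ) h1
  have := congrArg (Nat.cast : ℕ → ℝ) h2
  have := congrArg (Nat.cast : ℕ → ℝ) h3
  push_cast at *
  linarith

/-- Key rewrite: `f(X) = Σ_{c∈X} (W - 2 s(c)) + Σ_k w_k |C_k|`. -/
lemma rfObj_eq {L : Type*} [DecidableEq L] {p : ℕ} (w : Fin p → ℝ)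
    (C : Fin p → Finset (Finset L)) (X : Finset (Finset L)) :
    rfObj w C X = (∑ c ∈ X, ((∑ k, w k) - 2 * supp w C c))
      + ∑ k, w k * ((C k).card : ℝ) := by
  have hinter : ∀ k : Fin p, ((X ∩ C k).card : ℝ)
      = ∑ c ∈ X, (if c ∈ C k then (1:ℝ) else 0) := by
    intro k
    rw [← Finset.filter_mem_eq_inter, Finset.card_filter]
    push_cast
    rfl
  unfold rfObj
  have : ∀ k : Fin p, w k * ((symmDiff X (C k)).card : ℝ)
      = w k * X.card + w k * (C k).card
        - 2 * ∑ c ∈ X, (if c ∈ C k then w k else 0) := by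
    intro k
    rw [card_symmDiff_real, hinter]
    have hh : ∑ c ∈ X, (if c ∈ C k then w k else 0)
        = w k * ∑ c ∈ X, (if c ∈ C k then (1:ℝ) else 0) := by
      rw [Finset.mul_sum]
      exact Finset.sum_congr rfl (fun c _ => by split <;> simp)
    rw [hh]
    ring
  rw [Finset.sum_congr rfl (fun k _ => this k)]
  rw [Finset.sum_sub_distrib, Finset.sum_add_distrib]
  have hsw : ∑ k : Fin p, w k * (X.card : ℝ) = (∑ k, w k) * X.card := by
    rw [Finset.sum_mul]
  have hswap : ∑ k : Fin p, (2:ℝ) * ∑ c ∈ X, (if c ∈ C k then w k else 0)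
      = 2 * ∑ c ∈ X, supp w C c := by
    rw [← Finset.mul_sum, Finset.sum_comm]
    rfl
  rw [hsw, hswap, Finset.sum_sub_distrib]
  rw [Finset.sum_const, Finset.mul_sum, nsmul_eq_mul]
  ring

/-- Two clusters whose supports sum to more than `W` appear together in some `C k`. -/
lemma exists_common {L : Type*} [DecidableEq L] {p : ℕ} (w : Fin p → ℝ)
    (C : Fin p → Finset (Finset L)) (hw : ∀ k, 0 < w k)
    (c₁ c₂ : Finset L)
    (h : (∑ k, w k) < supp w C c₁ + supp w C c₂) :
    ∃ k, c₁ ∈ C k ∧ c₂ ∈ C k := by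
  by_contra hcon
  push_neg at hcon
  have hle : supp w C c₁ + supp w C c₂ ≤ ∑ k, w k := by
    unfold supp
    rw [← Finset.sum_add_distrib]
    apply Finset.sum_le_sum
    intro k _
    by_cases h1 : c₁ ∈ C k <;> by_cases h2 : c₂ ∈ C k <;>
      simp [h1, h2, (hw k).le]
    exact absurd h2 (hcon k h1)
  linarith

lemma supp_pos_mem {L : Type*} [DecidableEq L] {p : ℕ} (w : Fin p → ℝ)
    (C : Fin p → Finset (Finset L)) (c : Finset L)
    (h : 0 < supp w C c) : c ∈ Finset.univ.biUnion C := by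
  by_contra hc
  simp only [Finset.mem_biUnion, Finset.mem_univ, true_and, not_exists] at hc
  have : supp w C c = 0 := by
    unfold supp
    exact Finset.sum_eq_zero (fun k _ => by simp [hc k])
  linarith

/-- Theorem 1: for any pairwise-compatible subset `M` of the
half-support clusters `C' = {c ∈ C₁ ∪ … ∪ C_p : s(c) = W/2}`, the cluster set
`M⁺ ∪ M` (where `M⁺ = {c ∈ C₁ ∪ … ∪ C_p : s(c) > W/2}`) is laminar and minimizes
the weighted RF objective among all laminar cluster sets. -/
theorem majority_union_half_optimal {L : Type*} [DecidableEq L] {p : ℕ}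
    (w : Fin p → ℝ) (C : Fin p → Finset (Finset L))
    (hw : ∀ k, 0 < w k) (hCne : ∀ k, ∀ c ∈ C k, c.Nonempty)
    (hClam : ∀ k, laminar (C k))
    (M : Finset (Finset L))
    (hM : M ⊆ (Finset.univ.biUnion C).filter
      (fun c => supp w C c = (∑ k, w k) / 2))
    (hMcomp : ∀ c₁ ∈ M, ∀ c₂ ∈ M, compatible c₁ c₂) :
    laminar ((Finset.univ.biUnion C).filter
        (fun c => (∑ k, w k) / 2 < supp w C c) ∪ M) ∧
    ∀ X : Finset (Finset L), (∀ c ∈ X, c.Nonempty) → laminar X →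
      rfObj w C ((Finset.univ.biUnion C).filter
        (fun c => (∑ k, w k) / 2 < supp w C c) ∪ M) ≤ rfObj w C X := by
  set W := ∑ k, w k with hWdef
  have hW0 : 0 ≤ W := Finset.sum_nonneg (fun k _ => (hw k).le)
  set Mp := (Finset.univ.biUnion C).filter (fun c => W / 2 < supp w C c) with hMp
  -- supports
  have hsuppMp : ∀ c ∈ Mp, W / 2 < supp w C c := by
    intro c hc; exact (Finset.mem_filter.mp hc).2
  have hsuppM : ∀ c ∈ M, supp w C c = W / 2 := by
    intro c hc; exact (Finset.mem_filter.mp (hM hc)).2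
  -- compatibility from common membership
  have hcommon : ∀ c₁ c₂, W < supp w C c₁ + supp w C c₂ → compatible c₁ c₂ := by
    intro c₁ c₂ h
    obtain ⟨k, h1, h2⟩ := exists_common w C hw c₁ c₂ h
    exact hClam k c₁ h1 c₂ h2
  constructor
  · intro c₁ hc₁ c₂ hc₂
    rcases Finset.mem_union.mp hc₁ with h₁ | h₁ <;>
      rcases Finset.mem_union.mp hc₂ with h₂ | h₂
    · exact hcommon c₁ c₂ (by have := hsuppMp c₁ h₁; have := hsuppMp c₂ h₂; linarith)
    · exact hcommon c₁ c₂ (by have := hsuppMp c₁ h₁; have := hsuppM c₂ h₂; linarith)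
    · exact hcommon c₁ c₂ (by have := hsuppM c₁ h₁; have := hsuppMp c₂ h₂; linarith)
    · exact hMcomp c₁ h₁ c₂ h₂
  · intro X _ _
    rw [rfObj_eq, rfObj_eq]
    have hdisj : Disjoint Mp M := by
      rw [Finset.disjoint_left]
      intro c hc hcM
      have := hsuppMp c hc
      have := hsuppM c hcM
      linarith
    rw [Finset.sum_union hdisj]
    have hMzero : ∑ c ∈ M, (W - 2 * supp w C c) = 0 :=
      Finset.sum_eq_zero (fun c hc => by rw [hsuppM c hc]; ring)
    rw [hMzero, add_zero]
    set Xf := X.filter (fun c => W / 2 < supp w C c) with hXf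
    have hXfsub : Xf ⊆ Mp := by
      intro c hc
      rw [Finset.mem_filter] at hc ⊢
      refine ⟨supp_pos_mem w C c (by linarith [hc.2]), hc.2⟩
    have h1 : ∑ c ∈ Mp, (W - 2 * supp w C c) ≤ ∑ c ∈ Xf, (W - 2 * supp w C c) := by
      rw [← Finset.sum_sdiff hXfsub]
      have : ∑ c ∈ Mp \ Xf, (W - 2 * supp w C c) ≤ 0 := by
        apply Finset.sum_nonpos
        intro c hc
        have := hsuppMp c (Finset.mem_sdiff.mp hc).1
        linarith
      linarith
    have h2 : ∑ c ∈ Xf, (W - 2 * supp w C c) ≤ ∑ c ∈ X, (W - 2 * supp w C c) := by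
      apply Finset.sum_le_sum_of_subset_of_nonneg (Finset.filter_subset _ _)
      intro c hcX hc
      rw [Finset.mem_filter, not_and] at hc
      have := hc hcX
      push_neg at this
      linarith
    linarith
end

section
/- The minimum of the weighted Robinson–Foulds objective over all cluster sets C equals Σ_{c ∈ C₁ ∪ … ∪ C_p} min(s(c), W − s(c)), and this minimum is attained by the laminar majority set M⁺ = {c ∈ C₁ ∪ … ∪ C_p : s(c) > W/2}; in particular the minimum over all cluster sets coincides with the minimum over laminar cluster sets. -/
attribute [local instance] Classical.propDecidable

/-- the minimum of the weighted RF objective over all cluster sets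
equals `Σ_{c ∈ C₁ ∪ … ∪ C_p} min(s(c), W − s(c))`, and is attained by the laminar
majority set `M⁺ = {c ∈ C₁ ∪ … ∪ C_p : s(c) > W/2}`; in particular the minimum
over all cluster sets coincides with the minimum over laminar cluster sets. -/
theorem majority_set_minimizes {L : Type*} [DecidableEq L] {p : ℕ}
    (w : Fin p → ℝ) (C : Fin p → Finset (Finset L))
    (hw : ∀ k, 0 < w k) (hCne : ∀ k, ∀ c ∈ C k, c.Nonempty)
    (hClam : ∀ k, laminar (C k)) :
    laminar ((Finset.univ.biUnion C).filter
        (fun c => (∑ k, w k) / 2 < supp w C c)) ∧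
    rfObj w C ((Finset.univ.biUnion C).filter
        (fun c => (∑ k, w k) / 2 < supp w C c)) =
      ∑ c ∈ Finset.univ.biUnion C,
        min (supp w C c) ((∑ k, w k) - supp w C c) ∧
    ∀ X : Finset (Finset L), (∀ c ∈ X, c.Nonempty) →
      rfObj w C ((Finset.univ.biUnion C).filter
        (fun c => (∑ k, w k) / 2 < supp w C c)) ≤ rfObj w C X := by
  classical
  set U : Finset (Finset L) := Finset.univ.biUnion C with hUdef
  set M : Finset (Finset L) := U.filter (fun c => (∑ k, w k) / 2 < supp w C c)
    with hMdef
  have hs0 : ∀ c, 0 ≤ supp w C c := by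
    intro c
    apply Finset.sum_nonneg
    intro k _
    split
    · exact (hw k).le
    · exact le_refl 0
  have hsW : ∀ c, supp w C c ≤ ∑ k, w k := by
    intro c
    apply Finset.sum_le_sum
    intro k _
    split
    · exact le_refl _
    · exact (hw k).le
  -- the key exchange-of-summation identity
  have key : ∀ X : Finset (Finset L), rfObj w C X =
      ∑ c ∈ X ∪ U, (if c ∈ X then (∑ k, w k) - supp w C c else supp w C c) := by
    intro X
    have h1 : ∀ k, w k * ((symmDiff X (C k)).card : ℝ) =
        ∑ c ∈ X ∪ U, (if c ∈ symmDiff X (C k) then w k else 0) := by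
      intro k
      have hsub : symmDiff X (C k) ⊆ X ∪ U := by
        intro c hc
        rcases Finset.mem_symmDiff.mp hc with ⟨hc1, _⟩ | ⟨hc1, _⟩
        · exact Finset.mem_union_left _ hc1
        · exact Finset.mem_union_right _
            (Finset.mem_biUnion.mpr ⟨k, Finset.mem_univ k, hc1⟩)
      rw [Finset.sum_ite_mem, Finset.inter_eq_right.mpr hsub,
        Finset.sum_const, nsmul_eq_mul, mul_comm]
    unfold rfObj
    rw [Finset.sum_congr rfl (fun k _ => h1 k), Finset.sum_comm]
    apply Finset.sum_congr rfl
    intro c _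
    by_cases hcX : c ∈ X
    · simp only [hcX, if_true]
      have : ∀ k : Fin p, (if c ∈ symmDiff X (C k) then w k else 0) =
          w k - (if c ∈ C k then w k else 0) := by
        intro k
        by_cases hck : c ∈ C k
        · have : c ∉ symmDiff X (C k) := by
            rw [Finset.mem_symmDiff]; tauto
          simp [this, hck]
        · have : c ∈ symmDiff X (C k) := by
            rw [Finset.mem_symmDiff]; tauto
          simp [this, hck]
      rw [Finset.sum_congr rfl (fun k _ => this k), Finset.sum_sub_distrib]
      rfl
    · simp only [hcX, if_false]
      apply Finset.sum_congr rfl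
      intro k _
      have : c ∈ symmDiff X (C k) ↔ c ∈ C k := by
        rw [Finset.mem_symmDiff]; tauto
      by_cases hck : c ∈ C k <;> simp [this, hck]
  have hMU : M ⊆ U := Finset.filter_subset _ _
  refine ⟨?_, ?_, ?_⟩
  · -- laminarity of M
    intro c₁ h₁ c₂ h₂
    rw [hMdef, Finset.mem_filter] at h₁ h₂
    have hex : ∃ k, c₁ ∈ C k ∧ c₂ ∈ C k := by
      by_contra hno
      push_neg at hno

      have hle : supp w C c₁ + supp w C c₂ ≤ ∑ k, w k := by
        rw [supp, supp, ← Finset.sum_add_distrib]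
        apply Finset.sum_le_sum
        intro k _
        by_cases h1 : c₁ ∈ C k
        · by_cases h2 : c₂ ∈ C k
          · exact absurd h2 (hno k h1)
          · simp [h1, h2, (hw k).le]
        · by_cases h2 : c₂ ∈ C k <;> simp [h1, h2, (hw k).le]
      have := h₁.2
      have := h₂.2
      linarith
    obtain ⟨k, hk1, hk2⟩ := hex
    exact hClam k c₁ hk1 c₂ hk2
  · -- value at M
    rw [key M, Finset.union_eq_right.mpr hMU]
    apply Finset.sum_congr rfl
    intro c hc
    by_cases hcM : c ∈ M
    · have hgt : (∑ k, w k) / 2 < supp w C c := (Finset.mem_filter.mp hcM).2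
      rw [if_pos hcM, min_eq_right (by linarith)]
    · have hle : ¬ ((∑ k, w k) / 2 < supp w C c) := by
        intro h
        exact hcM (Finset.mem_filter.mpr ⟨hc, h⟩)
      push_neg at hle
      rw [if_neg hcM, min_eq_left (by linarith)]
  · -- minimality
    intro X _
    rw [key M, Finset.union_eq_right.mpr hMU, key X]
    calc ∑ c ∈ U, (if c ∈ M then (∑ k, w k) - supp w C c else supp w C c)
        ≤ ∑ c ∈ U, (if c ∈ X then (∑ k, w k) - supp w C c else supp w C c) := by
          apply Finset.sum_le_sum
          intro c hc
          by_cases hcM : c ∈ M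
          · have hgt : (∑ k, w k) / 2 < supp w C c := (Finset.mem_filter.mp hcM).2
            rw [if_pos hcM]
            split
            · exact le_refl _
            · linarith
          · have hle : ¬ ((∑ k, w k) / 2 < supp w C c) := by
              intro h
              exact hcM (Finset.mem_filter.mpr ⟨hc, h⟩)
            push_neg at hle
            rw [if_neg hcM]
            split
            · linarith
            · exact le_refl _
      _ ≤ ∑ c ∈ X ∪ U, (if c ∈ X then (∑ k, w k) - supp w C c else supp w C c) := by
          apply Finset.sum_le_sum_of_subset_of_nonneg (Finset.subset_union_right)
          intro c _ _
          split
          · linarith [hsW c]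
          · exact hs0 c
end
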